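/- For every even n ≥ 6, the decycling number of the cube of the n-cycle equals (n+2)/2: ∇(Cₙ³) = (n+2)/2. -/

import Mathlib

open SimpleGraph

/-- `S` is a decycling set of `G` if the subgraph of `G` induced on the complement of `S`
is acyclic. -/
def SimpleGraph.IsDecyclingSet {V : Type*} (G : SimpleGraph V) (S : Set V) : Prop :=
  (G.induce Sᶜ).IsAcyclic

/-- The decycling number `∇(G)` of `G`: the minimum cardinality of a decycling set of `G`. -/
noncomputable def SimpleGraph.decyclingNumber {V : Type*} (G : SimpleGraph V) : ℕ :=
  sInf {k | ∃ S : Set V, G.IsDecyclingSet S ∧ S.ncard = k}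

/-- The cube `Cₙ³` of the `n`-cycle: vertex set `ZMod n`, with `i` adjacent to `j` iff
`i ≠ j` and `i - j ≡ ±1`, `±2`, or `±3 (mod n)`. -/
def cycleCube (n : ℕ) : SimpleGraph (ZMod n) where
  Adj i j := i ≠ j ∧ (i - j = 1 ∨ j - i = 1 ∨ i - j = 2 ∨ j - i = 2 ∨ i - j = 3 ∨ j - i = 3)
  symm := by constructor; intro i j ⟨h, hd⟩; exact ⟨h.symm, by tauto⟩
  loopless := by constructor; intro i ⟨h, _⟩; exact h rfl

set_option linter.unusedVariables false
set_option linter.unusedSectionVars false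

/-- A graph that maps injectively to an arithmetic progression of step 2 with all edges
being steps of exactly 2 is acyclic. -/
lemma acyclic_of_step2 {V : Type*} {G : SimpleGraph V} (f : V → ℕ)
    (hinj : Function.Injective f)
    (hadj : ∀ u v, G.Adj u v → f u = f v + 2 ∨ f v = f u + 2)
    (heven : ∀ v, Even (f v)) : G.IsAcyclic := by
  have key : ∀ {u a v : V} (p : G.Walk a v), f v = f u + 2 → f a ≤ f u →
      s(u, v) ∈ p.edges := by
    intro u a v p
    induction p with
    | nil => intro huv h; omega
    | @cons a b v h q ih =>
      intro huv ha
      by_cases hb : f b ≤ f u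
      · simp only [Walk.edges_cons, List.mem_cons]
        exact Or.inr (ih huv hb)
      · rcases hadj _ _ h with h1 | h1
        · omega
        · have hb2 : f b = f u + 2 := by
            obtain ⟨k1, hk1⟩ := heven b
            obtain ⟨k2, hk2⟩ := heven u
            omega
          have hbv : b = v := hinj (by omega)
          have hau : a = u := hinj (by omega)
          subst hbv; subst hau
          simp [Walk.edges_cons]
  rw [isAcyclic_iff_forall_adj_isBridge]
  intro v w hvw
  rw [isBridge_iff_adj_and_forall_walk_mem_edges]
  intro p
  rcases hadj _ _ hvw with h1 | h1
  · have := key (u := w) p.reverse h1 le_rfl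
    rw [Walk.edges_reverse, List.mem_reverse] at this
    rwa [Sym2.eq_swap] at this
  · exact key p h1 le_rfl

section
variable {n : ℕ} (hn : 6 ≤ n) (h2 : Even n)
include hn

-- basic cast facts
lemma cast_eq_zero_iff' [NeZero n] (k : ℕ) : (k : ZMod n) = 0 ↔ n ∣ k :=
  ZMod.natCast_eq_zero_iff k n

lemma sub_eq_nat {a b : ZMod n} {d : ℕ} (hd : 0 < d) (hdn : d < n) (h : a - b = (d : ZMod n)) :
    a.val = b.val + d ∨ a.val + n = b.val + d := by
  haveI : NeZero n := ⟨by omega⟩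
  have ha : a = b + (d : ZMod n) := by rw [← h]; ring
  have hdv : (d : ZMod n).val = d := ZMod.val_cast_of_lt hdn
  have hv : a.val = (b.val + d) % n := by
    rw [ha, ZMod.val_add, hdv]
  have hb := ZMod.val_lt b
  rcases Nat.lt_or_ge (b.val + d) n with h' | h'
  · left; rw [hv, Nat.mod_eq_of_lt h']
  · right
    have : (b.val + d) % n = b.val + d - n := by
      rw [Nat.mod_eq_sub_mod h', Nat.mod_eq_of_lt (by omega)]
    omega

include h2 in
/-- in the complement of the decycling set, adjacency means vals differ by exactly 2 -/
lemma adj_val {u v : ZMod n} (hu : u ≠ 0) (hv : v ≠ 0)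
    (hue : u.val % 2 = 0) (hve : v.val % 2 = 0) (h : (cycleCube n).Adj u v) :
    u.val = v.val + 2 ∨ v.val = u.val + 2 := by
  haveI : NeZero n := ⟨by omega⟩
  have hn2 : n % 2 = 0 := by obtain ⟨r, hr⟩ := h2; omega
  have hul : u.val < n := ZMod.val_lt u
  have hvl : v.val < n := ZMod.val_lt v
  have hu0 : u.val ≠ 0 := fun h0 => hu (by rwa [← ZMod.val_eq_zero])
  have hv0 : v.val ≠ 0 := fun h0 => hv (by rwa [← ZMod.val_eq_zero])
  obtain ⟨-, hd⟩ := h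
  have get : ∀ (a b : ZMod n) (d : ℕ), 0 < d → d < n → a - b = (d : ℕ) →
      a.val = b.val + d ∨ a.val + n = b.val + d := fun a b d h1 h2 h3 => sub_eq_nat hn h1 h2 h3
  rcases hd with h | h | h | h | h | h
  · rcases get u v 1 (by omega) (by omega) (by exact_mod_cast h) with h' | h' <;> omega
  · rcases get v u 1 (by omega) (by omega) (by exact_mod_cast h) with h' | h' <;> omega
  · rcases get u v 2 (by omega) (by omega) (by exact_mod_cast h) with h' | h' <;> omega
  · rcases get v u 2 (by omega) (by omega) (by exact_mod_cast h) with h' | h' <;> omega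
  · rcases get u v 3 (by omega) (by omega) (by exact_mod_cast h) with h' | h' <;> omega
  · rcases get v u 3 (by omega) (by omega) (by exact_mod_cast h) with h' | h' <;> omega

end

section
variable {n : ℕ}

lemma range_filter_odd_card : ∀ m : ℕ, ((Finset.range (2 * m)).filter (fun k => k % 2 = 1)).card = m := by
  intro m
  induction m with
  | zero => simp
  | succ m ih =>
    have : 2 * (m + 1) = (2 * m + 1) + 1 := by ring
    rw [this, Finset.range_add_one, Finset.filter_insert, Finset.range_add_one, Finset.filter_insert]
    rw [if_pos (by omega), if_neg (by omega)]
    rw [Finset.card_insert_of_notMem (by simp)]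
    omega

lemma card_S0 (hn : 6 ≤ n) (h2 : Even n) :
    ({v : ZMod n | v = 0 ∨ v.val % 2 = 1}).ncard = (n + 2) / 2 := by
  haveI : NeZero n := ⟨by omega⟩
  obtain ⟨m, hm⟩ := h2
  classical
  rw [Set.ncard_eq_toFinset_card']
  have : ({v : ZMod n | v = 0 ∨ v.val % 2 = 1}).toFinset
      = (Finset.univ.filter (fun v : ZMod n => v = 0 ∨ v.val % 2 = 1)) := by
    ext v; simp
  rw [this]
  have hcard : (Finset.univ.filter (fun v : ZMod n => v = 0 ∨ v.val % 2 = 1)).card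
      = ((Finset.range n).filter (fun k => k = 0 ∨ k % 2 = 1)).card := by
    apply Finset.card_bij (fun v _ => v.val)
    · intro v hv
      simp only [Finset.mem_filter, Finset.mem_range, Finset.mem_univ, true_and] at hv ⊢
      refine ⟨ZMod.val_lt v, ?_⟩
      rcases hv with h | h
      · left; rw [h]; exact ZMod.val_zero
      · right; exact h
    · intro a _ b _ hab
      exact ZMod.val_injective n hab
    · intro k hk
      simp only [Finset.mem_filter, Finset.mem_range] at hk
      refine ⟨(k : ZMod n), ?_, ?_⟩
      · simp only [Finset.mem_filter, Finset.mem_univ, true_and]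
        rcases hk.2 with h | h
        · left; rw [h]; simp
        · right; rw [ZMod.val_cast_of_lt hk.1]; exact h
      · rw [ZMod.val_cast_of_lt hk.1]
  rw [hcard]
  have : (Finset.range n).filter (fun k => k = 0 ∨ k % 2 = 1)
      = insert 0 ((Finset.range n).filter (fun k => k % 2 = 1)) := by
    ext k
    simp only [Finset.mem_filter, Finset.mem_range, Finset.mem_insert]
    constructor
    · rintro ⟨h1, h2 | h2⟩
      · left; exact h2
      · right; exact ⟨h1, h2⟩
    · rintro (h | ⟨h1, h2⟩)
      · exact ⟨by omega, Or.inl h⟩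
      · exact ⟨h1, Or.inr h2⟩
  rw [this, Finset.card_insert_of_notMem (by simp), hm]
  have : m + m = 2 * m := by ring
  rw [this, range_filter_odd_card]
  omega

end

lemma S0_acyclic {n : ℕ} (hn : 6 ≤ n) (h2 : Even n) :
    ((cycleCube n).induce ({v : ZMod n | v = 0 ∨ v.val % 2 = 1})ᶜ).IsAcyclic := by
  haveI : NeZero n := ⟨by omega⟩
  refine acyclic_of_step2 (G := (cycleCube n).induce ({v : ZMod n | v = 0 ∨ v.val % 2 = 1})ᶜ) (fun v => (v : ZMod n).val) ?_ ?_ ?_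
  · intro u v huv
    exact Subtype.ext (ZMod.val_injective n huv)
  · rintro ⟨u, hu⟩ ⟨v, hv⟩ hadj
    simp only [Set.mem_compl_iff, Set.mem_setOf_eq, not_or] at hu hv
    rw [comap_adj] at hadj
    exact adj_val hn h2 hu.1 hv.1 (show u.val % 2 = 0 by omega) (show v.val % 2 = 0 by omega) hadj
  · rintro ⟨v, hv⟩
    simp only [Set.mem_compl_iff, Set.mem_setOf_eq, not_or] at hv
    show Even v.val
    exact Nat.even_iff.mpr (by omega)

section
variable {n : ℕ}

lemma castne (hn : 6 ≤ n) {k : ℕ} (h1 : 0 < k) (h2 : k < n) : (k : ZMod n) ≠ 0 := by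
  haveI : NeZero n := ⟨by omega⟩
  intro h
  have := (ZMod.natCast_eq_zero_iff k n).mp h
  have := Nat.le_of_dvd h1 this
  omega

lemma castinj (hn : 6 ≤ n) {c d : ℕ} (hc : c ≤ n) (hd : d < n) (h : (c : ZMod n) = (d : ZMod n)) :
    c = d ∨ (c = n ∧ d = 0) := by
  haveI : NeZero n := ⟨by omega⟩
  rcases eq_or_lt_of_le hc with rfl | hlt
  · right
    rw [ZMod.natCast_self] at h
    refine ⟨rfl, ?_⟩
    have := ZMod.val_cast_of_lt hd
    rw [← h] at this
    simpa using this.symm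
  · left
    have h1 := ZMod.val_cast_of_lt hlt
    have h2 := ZMod.val_cast_of_lt hd
    rw [h] at h1
    omega

lemma adjd (hn : 6 ≤ n) (v : ZMod n) {d : ℕ} (hd : d = 1 ∨ d = 2 ∨ d = 3) :
    (cycleCube n).Adj v (v + (d : ZMod n)) := by
  have hne : v ≠ v + (d : ZMod n) := by
    intro h
    exact castne hn (by omega) (by omega) (left_eq_add.mp h)
  have hsub : (v + (d : ZMod n)) - v = (d : ZMod n) := by ring
  refine ⟨hne, ?_⟩
  rcases hd with rfl | rfl | rfl
  · exact Or.inr (Or.inl (by exact_mod_cast hsub))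
  · exact Or.inr (Or.inr (Or.inr (Or.inl (by exact_mod_cast hsub))))
  · exact Or.inr (Or.inr (Or.inr (Or.inr (Or.inr (by exact_mod_cast hsub)))))

lemma adj1 (hn : 6 ≤ n) (v : ZMod n) : (cycleCube n).Adj v (v + 1) := by
  have := adjd hn v (Or.inl rfl); simpa using this

lemma adj2 (hn : 6 ≤ n) (v : ZMod n) : (cycleCube n).Adj v (v + 2) := by
  have := adjd hn v (Or.inr (Or.inl rfl)); simpa using this

lemma adj3 (hn : 6 ≤ n) (v : ZMod n) : (cycleCube n).Adj v (v + 3) := by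
  have := adjd hn v (Or.inr (Or.inr rfl)); simpa using this

end

section
variable {n : ℕ} {S : Set (ZMod n)}

lemma tri_free (hac : ((cycleCube n).induce Sᶜ).IsAcyclic) {a b c : ZMod n}
    (ha : a ∈ Sᶜ) (hb : b ∈ Sᶜ) (hc : c ∈ Sᶜ)
    (hab : (cycleCube n).Adj a b) (hac' : (cycleCube n).Adj a c)
    (hbc : (cycleCube n).Adj b c) : False := by
  set G' := (cycleCube n).induce Sᶜ with hG'
  have hAB : G'.Adj ⟨a, ha⟩ ⟨b, hb⟩ := by rwa [hG', comap_adj]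
  have hbr := isAcyclic_iff_forall_adj_isBridge.mp hac hAB
  rw [isBridge_iff] at hbr
  apply hbr
  set e : Sym2 (Sᶜ : Set (ZMod n)) := s((⟨a, ha⟩ : (Sᶜ : Set (ZMod n))), ⟨b, hb⟩) with he
  have hne_ab : a ≠ b := hab.1
  have hne_ac : a ≠ c := hac'.1
  have hne_bc : b ≠ c := hbc.1
  have step1 : (G' \ fromEdgeSet {e}).Adj ⟨a, ha⟩ ⟨c, hc⟩ := by
    rw [sdiff_adj, fromEdgeSet_adj]
    refine ⟨by rwa [hG', comap_adj], ?_⟩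
    rintro ⟨h1, -⟩
    rw [Set.mem_singleton_iff, he, Sym2.eq_iff] at h1
    rcases h1 with ⟨-, h⟩ | ⟨h, -⟩
    · exact hne_bc (congrArg Subtype.val h).symm
    · exact hne_ab (congrArg Subtype.val h)
  have step2 : (G' \ fromEdgeSet {e}).Adj ⟨c, hc⟩ ⟨b, hb⟩ := by
    rw [sdiff_adj, fromEdgeSet_adj]
    refine ⟨by rw [hG', comap_adj]; exact hbc.symm, ?_⟩
    rintro ⟨h1, -⟩
    rw [Set.mem_singleton_iff, he, Sym2.eq_iff] at h1
    rcases h1 with ⟨h, -⟩ | ⟨-, h⟩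
    · exact hne_ac (congrArg Subtype.val h).symm
    · exact hne_ab (congrArg Subtype.val h).symm
  exact (step1.reachable).trans step2.reachable

end

section
variable {n : ℕ}

/-- indicator window sum -/
def wsum (F : Finset (ZMod n)) (i : ZMod n) : ℕ :=
  (if i ∈ F then 1 else 0) + (if i + 1 ∈ F then 1 else 0)
    + (if i + 2 ∈ F then 1 else 0) + (if i + 3 ∈ F then 1 else 0)

variable {S : Set (ZMod n)} {F : Finset (ZMod n)}

lemma window_le (hn : 6 ≤ n) (hac : ((cycleCube n).induce Sᶜ).IsAcyclic)
    (hmem : ∀ v : ZMod n, v ∈ F ↔ v ∈ Sᶜ) (i : ZMod n) : wsum F i ≤ 2 := by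
  have e11 : i + 1 + 1 = i + 2 := by ring
  have e12 : i + 1 + 2 = i + 3 := by ring
  have e21 : i + 2 + 1 = i + 3 := by ring
  have t012 : ¬(i ∈ F ∧ i + 1 ∈ F ∧ i + 2 ∈ F) := by
    rintro ⟨h0, h1, h2⟩
    exact tri_free hac ((hmem _).mp h0) ((hmem _).mp h1) ((hmem _).mp h2)
      (adj1 hn i) (adj2 hn i) (e11 ▸ adj1 hn (i + 1))
  have t013 : ¬(i ∈ F ∧ i + 1 ∈ F ∧ i + 3 ∈ F) := by
    rintro ⟨h0, h1, h3⟩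
    exact tri_free hac ((hmem _).mp h0) ((hmem _).mp h1) ((hmem _).mp h3)
      (adj1 hn i) (adj3 hn i) (e12 ▸ adj2 hn (i + 1))
  have t023 : ¬(i ∈ F ∧ i + 2 ∈ F ∧ i + 3 ∈ F) := by
    rintro ⟨h0, h2, h3⟩
    exact tri_free hac ((hmem _).mp h0) ((hmem _).mp h2) ((hmem _).mp h3)
      (adj2 hn i) (adj3 hn i) (e21 ▸ adj1 hn (i + 2))
  have t123 : ¬(i + 1 ∈ F ∧ i + 2 ∈ F ∧ i + 3 ∈ F) := by
    rintro ⟨h1, h2, h3⟩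
    exact tri_free hac ((hmem _).mp h1) ((hmem _).mp h2) ((hmem _).mp h3)
      (e11 ▸ adj1 hn (i + 1)) (e12 ▸ adj2 hn (i + 1)) (e21 ▸ adj1 hn (i + 2))
  unfold wsum
  by_cases h0 : i ∈ F <;> by_cases h1 : i + 1 ∈ F <;>
    by_cases h2 : i + 2 ∈ F <;> by_cases h3 : i + 3 ∈ F <;>
    simp [h0, h1, h2, h3] <;>
    first
      | omega
      | (exact t012 ⟨h0, h1, h2⟩)
      | (exact t013 ⟨h0, h1, h3⟩)
      | (exact t023 ⟨h0, h2, h3⟩)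
      | (exact t123 ⟨h1, h2, h3⟩)

lemma sum_shift [NeZero n] (F : Finset (ZMod n)) (c : ZMod n) :
    ∑ i : ZMod n, (if i + c ∈ F then 1 else 0) = F.card := by
  have : ∑ i : ZMod n, (if i + c ∈ F then (1:ℕ) else 0)
      = ∑ i : ZMod n, (if i ∈ F then 1 else 0) :=
    Fintype.sum_equiv (Equiv.addRight c) _ _ (fun i => rfl)
  rw [this, Finset.sum_ite_mem, Finset.univ_inter, Finset.sum_const, smul_eq_mul, mul_one]

lemma total_eq [NeZero n] (F : Finset (ZMod n)) :
    ∑ i : ZMod n, wsum F i = 4 * F.card := by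
  unfold wsum
  rw [Finset.sum_add_distrib, Finset.sum_add_distrib, Finset.sum_add_distrib]
  have h0 : ∑ i : ZMod n, (if i ∈ F then (1:ℕ) else 0) = F.card := by
    rw [Finset.sum_ite_mem, Finset.univ_inter, Finset.sum_const, smul_eq_mul, mul_one]
  rw [h0, sum_shift, sum_shift, sum_shift]
  ring

lemma card_le (hn : 6 ≤ n) (hac : ((cycleCube n).induce Sᶜ).IsAcyclic)
    (hmem : ∀ v : ZMod n, v ∈ F ↔ v ∈ Sᶜ) : 2 * F.card ≤ n := by
  haveI : NeZero n := ⟨by omega⟩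
  have h1 : ∑ i : ZMod n, wsum F i ≤ ∑ _i : ZMod n, 2 :=
    Finset.sum_le_sum (fun i _ => window_le hn hac hmem i)
  rw [total_eq, Finset.sum_const, Finset.card_univ, ZMod.card, smul_eq_mul] at h1
  omega

lemma all_windows_eq (hn : 6 ≤ n) (hac : ((cycleCube n).induce Sᶜ).IsAcyclic)
    (hmem : ∀ v : ZMod n, v ∈ F ↔ v ∈ Sᶜ) (hcard : 2 * F.card = n) (i : ZMod n) :
    wsum F i = 2 := by
  haveI : NeZero n := ⟨by omega⟩
  by_contra hne
  have hlt : wsum F i < 2 := lt_of_le_of_ne (window_le hn hac hmem i) hne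
  have h1 : ∑ j : ZMod n, wsum F j < ∑ _j : ZMod n, 2 :=
    Finset.sum_lt_sum (fun j _ => window_le hn hac hmem j) ⟨i, Finset.mem_univ i, hlt⟩
  rw [total_eq, Finset.sum_const, Finset.card_univ, ZMod.card, smul_eq_mul] at h1
  omega

end

section
variable {n : ℕ} {F : Finset (ZMod n)}

lemma mem_iff_of_wsum (hw : ∀ i : ZMod n, wsum F i = 2) (i : ZMod n) :
    i + 4 ∈ F ↔ i ∈ F := by
  have A := hw i
  have B := hw (i + 1)
  unfold wsum at A B
  rw [show i + 1 + 1 = i + 2 by ring, show i + 1 + 2 = i + 3 by ring,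
    show i + 1 + 3 = i + 4 by ring] at B
  by_cases h0 : i ∈ F <;> by_cases h4 : i + 4 ∈ F <;>
    simp [h0, h4] at A B ⊢ <;> omega

lemma mem_iff_of_wsum_mul (hw : ∀ i : ZMod n, wsum F i = 2) (t : ℕ) (i : ZMod n) :
    i + (4 * t : ℕ) ∈ F ↔ i ∈ F := by
  induction t with
  | zero => simp
  | succ t ih =>
    have : (i + (4 * (t + 1) : ℕ) : ZMod n) = (i + (4 * t : ℕ)) + 4 := by push_cast; ring
    rw [this, mem_iff_of_wsum hw]
    exact ih
end

section
variable {n : ℕ} {S : Set (ZMod n)} {F : Finset (ZMod n)}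

lemma caseA (hn : 6 ≤ n) {m : ℕ} (hm : n = m + m)
    (hac : ((cycleCube n).induce Sᶜ).IsAcyclic)
    (hmem : ∀ v : ZMod n, v ∈ F ↔ v ∈ Sᶜ)
    (hstep2 : ∀ w : ZMod n, w ∈ F → w + 2 ∈ F)
    (v0 : ZMod n) (hv0 : v0 ∈ F) : False := by
  haveI : NeZero n := ⟨by omega⟩
  have hv0S : v0 ∈ Sᶜ := (hmem _).mp hv0
  have hmem2k : ∀ k : ℕ, (v0 + (2 * k : ℕ) : ZMod n) ∈ F := by
    intro k
    induction k with
    | zero => simpa using hv0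
    | succ k ih =>
      have e : (v0 + (2 * (k + 1) : ℕ) : ZMod n) = (v0 + (2 * k : ℕ)) + 2 := by
        push_cast; ring
      rw [e]; exact hstep2 _ ih
  have h21 : ((2 * 1 : ℕ) : ZMod n) = 2 := by push_cast; ring
  have hv2S : (v0 + 2 : ZMod n) ∈ Sᶜ := (hmem _).mp (by have := hmem2k 1; rwa [h21] at this)
  set G' := (cycleCube n).induce Sᶜ with hG'
  have hA : G'.Adj ⟨v0, hv0S⟩ ⟨v0 + 2, hv2S⟩ := by rw [hG', comap_adj]; exact adj2 hn v0
  have hbr := isAcyclic_iff_forall_adj_isBridge.mp hac hA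
  rw [isBridge_iff] at hbr
  apply hbr
  set e := s((⟨v0, hv0S⟩ : (Sᶜ : Set (ZMod n))), (⟨v0 + 2, hv2S⟩ : (Sᶜ : Set (ZMod n)))) with he
  set G'' := G' \ fromEdgeSet {e} with hG''
  have hstep : ∀ k : ℕ, 1 ≤ k → k < m →
      ∀ (p1 : ((v0 + (2 * k : ℕ) : ZMod n)) ∈ Sᶜ) (p2 : ((v0 + (2 * (k + 1) : ℕ) : ZMod n)) ∈ Sᶜ),
      G''.Adj ⟨_, p1⟩ ⟨_, p2⟩ := by
    intro k hk1 hk2 p1 p2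
    rw [hG'', sdiff_adj, fromEdgeSet_adj]
    have e2 : (v0 + (2 * (k + 1) : ℕ) : ZMod n) = (v0 + (2 * k : ℕ)) + 2 := by push_cast; ring
    refine ⟨?_, ?_⟩
    · rw [hG', comap_adj]
      show (cycleCube n).Adj (v0 + (2 * k : ℕ) : ZMod n) (v0 + (2 * (k + 1) : ℕ) : ZMod n)
      rw [e2]; exact adj2 hn _
    · rintro ⟨h1, -⟩
      rw [Set.mem_singleton_iff, he, Sym2.eq_iff] at h1
      rcases h1 with ⟨ha, hb⟩ | ⟨ha, hb⟩
      · have ha' : (v0 + (2 * k : ℕ) : ZMod n) = v0 := congrArg Subtype.val ha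
        have : ((2 * k : ℕ) : ZMod n) = 0 := by
          have h' : v0 + ((2 * k : ℕ) : ZMod n) = v0 + 0 := by rw [ha', add_zero]
          exact add_left_cancel h'
        exact castne hn (by omega) (by omega) this
      · have ha' : (v0 + (2 * k : ℕ) : ZMod n) = v0 + 2 := congrArg Subtype.val ha
        have hb' : (v0 + (2 * (k + 1) : ℕ) : ZMod n) = v0 := congrArg Subtype.val hb
        have h2eq : ((2 * k : ℕ) : ZMod n) = ((2 : ℕ) : ZMod n) := by
          have : (v0 + (2 * k : ℕ) : ZMod n) = v0 + ((2 : ℕ) : ZMod n) := by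
            rw [ha']; push_cast; ring
          exact add_left_cancel this
        rcases castinj hn (by omega) (by omega) h2eq with h' | ⟨h', -⟩
        · -- 2k = 2, so k = 1, then v0 + 4 = v0
          have hk : k = 1 := by omega
          subst hk
          have : ((2 * (1 + 1) : ℕ) : ZMod n) = 0 := by
            have h' : v0 + ((2 * (1 + 1) : ℕ) : ZMod n) = v0 + 0 := by rw [hb', add_zero]
            exact add_left_cancel h'
          exact castne hn (by omega) (by omega) this
        · omega
  have hreach : ∀ k : ℕ, 1 ≤ k → k ≤ m → ∀ (p : ((v0 + (2 * k : ℕ) : ZMod n)) ∈ Sᶜ),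
      G''.Reachable ⟨v0 + 2, hv2S⟩ ⟨_, p⟩ := by
    intro k
    induction k with
    | zero => intro h; exact absurd h (by omega)
    | succ k ih =>
      intro h1 h2 p
      rcases Nat.eq_or_lt_of_le h1 with heq | hlt
      · have hk0 : k = 0 := by omega
        subst hk0
        have : (⟨v0 + (2 * 1 : ℕ), p⟩ : (Sᶜ : Set (ZMod n))) = ⟨v0 + 2, hv2S⟩ :=
          Subtype.ext (by show v0 + ((2 * 1 : ℕ) : ZMod n) = v0 + 2; rw [h21])
        rw [this]
      · have hk : 1 ≤ k := by omega
        have pk : ((v0 + (2 * k : ℕ)) : ZMod n) ∈ Sᶜ := (hmem _).mp (hmem2k k)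
        exact (ih hk (by omega) pk).trans (hstep k hk (by omega) pk p).reachable
  have pfin : ((v0 + (2 * m : ℕ)) : ZMod n) ∈ Sᶜ := (hmem _).mp (hmem2k m)
  have hfin := hreach m (by omega) le_rfl pfin
  have hveq : (⟨v0 + (2 * m : ℕ), pfin⟩ : (Sᶜ : Set (ZMod n))) = ⟨v0, hv0S⟩ := by
    refine Subtype.ext ?_
    show v0 + ((2 * m : ℕ) : ZMod n) = v0
    have : ((2 * m : ℕ) : ZMod n) = 0 := by
      rw [show 2 * m = n by omega]; exact ZMod.natCast_self n
    rw [this, add_zero]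
  rw [hveq] at hfin
  exact hfin.symm

end

section
variable {n : ℕ} {S : Set (ZMod n)} {F : Finset (ZMod n)}

lemma cancel_cast (hn : 6 ≤ n) {v : ZMod n} {a b : ℕ} (ha : a < n) (hb : b < n)
    (h : v + (a : ZMod n) = v + (b : ZMod n)) : a = b := by
  rcases castinj hn (le_of_lt ha) hb (add_left_cancel h) with h' | ⟨h', -⟩
  · exact h'
  · omega

lemma caseB (hn : 6 ≤ n) (h4 : n % 4 = 0)
    (hac : ((cycleCube n).induce Sᶜ).IsAcyclic)
    (hmem : ∀ v : ZMod n, v ∈ F ↔ v ∈ Sᶜ)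
    (hstepB : ∀ u : ZMod n, u ∈ F → u + 1 ∈ F → u + 4 ∈ F ∧ u + 5 ∈ F)
    (w : ZMod n) (hw0 : w ∈ F) (hw1 : w + 1 ∈ F) : False := by
  haveI : NeZero n := ⟨by omega⟩
  set q := n / 4 with hq
  have hn4 : n = 4 * q := by omega
  have hq2 : 2 ≤ q := by omega
  have hmem4k : ∀ k : ℕ, (w + (4 * k : ℕ) : ZMod n) ∈ F ∧ (w + (4 * k : ℕ) + 1 : ZMod n) ∈ F := by
    intro k
    induction k with
    | zero => constructor <;> simpa using (by assumption : _)
    | succ k ih =>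
      have e4 : (w + (4 * (k + 1) : ℕ) : ZMod n) = (w + (4 * k : ℕ)) + 4 := by push_cast; ring
      have e5 : (w + (4 * (k + 1) : ℕ) + 1 : ZMod n) = (w + (4 * k : ℕ)) + 5 := by push_cast; ring
      have := hstepB _ ih.1 ih.2
      exact ⟨by rw [e4]; exact this.1, by rw [e5]; exact this.2⟩
  have hw0S : w ∈ Sᶜ := (hmem _).mp hw0
  have hw1S : (w + 1 : ZMod n) ∈ Sᶜ := (hmem _).mp hw1
  set G' := (cycleCube n).induce Sᶜ with hG'
  have hA : G'.Adj ⟨w, hw0S⟩ ⟨w + 1, hw1S⟩ := by rw [hG', comap_adj]; exact adj1 hn w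
  have hbr := isAcyclic_iff_forall_adj_isBridge.mp hac hA
  rw [isBridge_iff] at hbr
  apply hbr
  set e := s((⟨w, hw0S⟩ : (Sᶜ : Set (ZMod n))), (⟨w + 1, hw1S⟩ : (Sᶜ : Set (ZMod n)))) with he
  set G'' := G' \ fromEdgeSet {e} with hG''
  -- edge 1 : from w + 4k to w + 4k + 1 (k ≥ 1, k ≤ q - 1)
  have hE1 : ∀ k : ℕ, 1 ≤ k → k < q →
      ∀ (p1 : ((w + (4 * k : ℕ) : ZMod n)) ∈ Sᶜ) (p2 : ((w + (4 * k : ℕ) + 1 : ZMod n)) ∈ Sᶜ),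
      G''.Adj ⟨_, p1⟩ ⟨_, p2⟩ := by
    intro k hk1 hk2 p1 p2
    rw [hG'', sdiff_adj, fromEdgeSet_adj]
    refine ⟨by rw [hG', comap_adj]; exact adj1 hn _, ?_⟩
    rintro ⟨h1, -⟩
    rw [Set.mem_singleton_iff, he, Sym2.eq_iff] at h1
    rcases h1 with ⟨ha, -⟩ | ⟨-, hb⟩
    · have ha' : (w + (4 * k : ℕ) : ZMod n) = w := congrArg Subtype.val ha
      have : (w + (4 * k : ℕ) : ZMod n) = w + ((0 : ℕ) : ZMod n) := by rw [ha']; push_cast; ring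
      have := cancel_cast hn (by omega) (by omega) this
      omega
    · have hb' : w + (((4 * k : ℕ) : ZMod n) + 1) = w := by
        rw [← add_assoc]; exact congrArg Subtype.val hb
      have hzero := add_left_cancel (hb'.trans (add_zero w).symm)
      have hz2 : ((4 * k + 1 : ℕ) : ZMod n) = 0 := by
        push_cast at hzero ⊢; exact hzero
      exact castne hn (by omega) (by omega) hz2
  -- edge 2 : from w + 4k + 1 to w + 4(k+1) (k ≥ 1, k + 1 ≤ q)
  have hE2 : ∀ k : ℕ, 1 ≤ k → k < q →
      ∀ (p1 : ((w + (4 * k : ℕ) + 1 : ZMod n)) ∈ Sᶜ) (p2 : ((w + (4 * (k + 1) : ℕ) : ZMod n)) ∈ Sᶜ),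
      G''.Adj ⟨_, p1⟩ ⟨_, p2⟩ := by
    intro k hk1 hk2 p1 p2
    rw [hG'', sdiff_adj, fromEdgeSet_adj]
    have e3 : (w + (4 * (k + 1) : ℕ) : ZMod n) = (w + (4 * k : ℕ) + 1) + 3 := by push_cast; ring
    refine ⟨?_, ?_⟩
    · rw [hG', comap_adj]
      show (cycleCube n).Adj (w + (4 * k : ℕ) + 1 : ZMod n) (w + (4 * (k + 1) : ℕ) : ZMod n)
      rw [e3]; exact adj3 hn _
    · rintro ⟨h1, -⟩
      rw [Set.mem_singleton_iff, he, Sym2.eq_iff] at h1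
      rcases h1 with ⟨ha, -⟩ | ⟨hb, -⟩
      · have ha' : w + (((4 * k : ℕ) : ZMod n) + 1) = w := by
          rw [← add_assoc]; exact congrArg Subtype.val ha
        have hzero := add_left_cancel (ha'.trans (add_zero w).symm)
        have hz2 : ((4 * k + 1 : ℕ) : ZMod n) = 0 := by
          push_cast at hzero ⊢; exact hzero
        exact castne hn (by omega) (by omega) hz2
      · have hb' : (w + (4 * k : ℕ) + 1 : ZMod n) = w + 1 := congrArg Subtype.val hb
        have h'' : w + ((4 * k : ℕ) : ZMod n) = w := add_right_cancel hb'
        have hzero := add_left_cancel (h''.trans (add_zero w).symm)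
        have hz2 : ((4 * k : ℕ) : ZMod n) = 0 := hzero
        exact castne hn (by omega) (by omega) hz2
  have hreach : ∀ k : ℕ, 1 ≤ k → k ≤ q → ∀ (p : ((w + (4 * k : ℕ) : ZMod n)) ∈ Sᶜ),
      G''.Reachable ⟨w + 1, hw1S⟩ ⟨_, p⟩ := by
    intro k
    induction k with
    | zero => intro h; exact absurd h (by omega)
    | succ k ih =>
      intro h1 h2 p
      rcases Nat.eq_or_lt_of_le h1 with heq | hlt
      · -- base : single edge (w+1) -> (w+4)
        have hk0 : k = 0 := by omega
        subst hk0
        have e3 : (w + (4 * 1 : ℕ) : ZMod n) = (w + 1) + 3 := by push_cast; ring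
        refine Adj.reachable ?_
        rw [hG'', sdiff_adj, fromEdgeSet_adj]
        refine ⟨?_, ?_⟩
        · rw [hG', comap_adj]
          show (cycleCube n).Adj (w + 1 : ZMod n) (w + (4 * 1 : ℕ) : ZMod n)
          rw [e3]; exact adj3 hn _
        · rintro ⟨h1, -⟩
          rw [Set.mem_singleton_iff, he, Sym2.eq_iff] at h1
          rcases h1 with ⟨ha, -⟩ | ⟨-, hb⟩
          · have ha' : (w + 1 : ZMod n) = w := congrArg Subtype.val ha
            have hzero := add_left_cancel (ha'.trans (add_zero w).symm)
            have hz2 : ((1 : ℕ) : ZMod n) = 0 := by push_cast; exact hzero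
            exact castne hn (by omega) (by omega) hz2
          · have hb' : (w + (4 * 1 : ℕ) : ZMod n) = w := congrArg Subtype.val hb
            have hzero := add_left_cancel (hb'.trans (add_zero w).symm)
            exact castne hn (by omega) (by omega) hzero
      · have hk : 1 ≤ k := by omega
        have pk : ((w + (4 * k : ℕ)) : ZMod n) ∈ Sᶜ := (hmem _).mp (hmem4k k).1
        have pk1 : ((w + (4 * k : ℕ) + 1) : ZMod n) ∈ Sᶜ := (hmem _).mp (hmem4k k).2
        exact ((ih hk (by omega) pk).trans
          (hE1 k hk (by omega) pk pk1).reachable).trans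
          (hE2 k hk (by omega) pk1 p).reachable
  have pfin : ((w + (4 * q : ℕ)) : ZMod n) ∈ Sᶜ := (hmem _).mp (hmem4k q).1
  have hfin := hreach q (by omega) le_rfl pfin
  have hveq : (⟨w + (4 * q : ℕ), pfin⟩ : (Sᶜ : Set (ZMod n))) = ⟨w, hw0S⟩ := by
    refine Subtype.ext ?_
    show w + ((4 * q : ℕ) : ZMod n) = w
    have : ((4 * q : ℕ) : ZMod n) = 0 := by
      rw [show 4 * q = n by omega]; exact ZMod.natCast_self n
    rw [this, add_zero]
  rw [hveq] at hfin
  exact hfin.symm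

end

section
variable {n : ℕ}

lemma lower_bound (hn : 6 ≤ n) (h2 : Even n) (S : Set (ZMod n))
    (hac : ((cycleCube n).induce Sᶜ).IsAcyclic) : (n + 2) / 2 ≤ S.ncard := by
  haveI : NeZero n := ⟨by omega⟩
  obtain ⟨m, hm⟩ := h2
  by_contra hlt
  push_neg at hlt
  set F := (Set.toFinite Sᶜ).toFinset with hF
  have hmem : ∀ v : ZMod n, v ∈ F ↔ v ∈ Sᶜ := fun v => Set.Finite.mem_toFinset _
  have hcomp : S.ncard + Sᶜ.ncard = n := by
    rw [Set.ncard_add_ncard_compl S (Set.toFinite S), Nat.card_eq_fintype_card, ZMod.card]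
  have hFcard : Sᶜ.ncard = F.card := Set.ncard_eq_toFinset_card _ (Set.toFinite Sᶜ)
  have hle := card_le hn hac hmem
  have hcard : 2 * F.card = n := by omega
  have hw := all_windows_eq hn hac hmem hcard
  have hpos : 0 < F.card := by omega
  obtain ⟨v0, hv0⟩ := Finset.card_pos.mp hpos
  by_cases hcons : ∃ u : ZMod n, u ∈ F ∧ u + 1 ∈ F
  · obtain ⟨w, hw0, hw1⟩ := hcons
    have per4t := mem_iff_of_wsum_mul hw
    have hw2 : w + 2 ∉ F := by
      intro h
      have hA := hw w
      unfold wsum at hA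
      rw [if_pos hw0, if_pos hw1, if_pos h] at hA
      omega
    have h4 : n % 4 = 0 := by
      by_contra h4'
      have ht : 4 * ((n + 2) / 4) = n + 2 := by omega
      have hper := per4t ((n + 2) / 4) w
      have hcast : ((4 * ((n + 2) / 4) : ℕ) : ZMod n) = 2 := by
        rw [ht]; push_cast [ZMod.natCast_self]; ring
      rw [hcast] at hper
      exact hw2 (hper.mpr hw0)
    have hstepB : ∀ u : ZMod n, u ∈ F → u + 1 ∈ F → u + 4 ∈ F ∧ u + 5 ∈ F := by
      intro u h0 h1
      have A := hw u
      have B := hw (u + 1)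
      have C := hw (u + 2)
      unfold wsum at A B C
      rw [show u+1+1 = u+2 by ring, show u+1+2 = u+3 by ring, show u+1+3 = u+4 by ring] at B
      rw [show u+2+1 = u+3 by ring, show u+2+2 = u+4 by ring, show u+2+3 = u+5 by ring] at C
      rw [if_pos h0, if_pos h1] at A
      have h2' : u + 2 ∉ F := by intro h; rw [if_pos h] at A; omega
      have h3' : u + 3 ∉ F := by intro h; rw [if_pos h] at A; omega
      rw [if_pos h1, if_neg h2', if_neg h3'] at B
      have h4' : u + 4 ∈ F := by by_contra hh; rw [if_neg hh] at B; omega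
      rw [if_neg h2', if_neg h3', if_pos h4'] at C
      have h5' : u + 5 ∈ F := by by_contra hh; rw [if_neg hh] at C; omega
      exact ⟨h4', h5'⟩
    exact caseB hn h4 hac hmem hstepB w hw0 hw1
  · push_neg at hcons
    have hstep2 : ∀ u : ZMod n, u ∈ F → u + 2 ∈ F := by
      intro u h0
      have h1 : u + 1 ∉ F := hcons u h0
      by_contra h2'
      have A := hw u
      have B := hw (u + 1)
      unfold wsum at A B
      rw [show u+1+1 = u+2 by ring, show u+1+2 = u+3 by ring, show u+1+3 = u+4 by ring] at B
      rw [if_pos h0, if_neg h1, if_neg h2'] at A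
      have h3' : u + 3 ∈ F := by by_contra hh; rw [if_neg hh] at A; omega
      rw [if_neg h1, if_neg h2', if_pos h3'] at B
      have h4' : u + 4 ∈ F := by by_contra hh; rw [if_neg hh] at B; omega
      exact hcons (u + 3) h3' (by rw [show u+3+1 = u+4 by ring]; exact h4')
    exact caseA hn hm hac hmem hstep2 v0 hv0

end


/-- For every even `n ≥ 6`, `∇(Cₙ³) = (n+2)/2`. -/
theorem decyclingNumber_cycleCube_even (n : ℕ) (hn : 6 ≤ n) (h2 : Even n) :
    (cycleCube n).decyclingNumber = (n + 2) / 2 := by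
  haveI : NeZero n := ⟨by omega⟩
  apply le_antisymm
  · apply Nat.sInf_le
    exact ⟨{v : ZMod n | v = 0 ∨ v.val % 2 = 1}, S0_acyclic hn h2, card_S0 hn h2⟩
  · apply le_csInf
    · exact ⟨{v : ZMod n | v = 0 ∨ v.val % 2 = 1}.ncard,
        {v : ZMod n | v = 0 ∨ v.val % 2 = 1}, S0_acyclic hn h2, rfl⟩
    · rintro k ⟨S, hS, rfl⟩
      exact lower_bound hn h2 S hS
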